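/- A finite Galois field extension k ⊂ L has Boolean lattice of intermediate fields if and only if its Galois group is cyclic of squarefree order. -/

import Mathlib

/-- A bounded lattice is Boolean if it is distributive and complemented. -/
def IsBooleanLattice (α : Type*) [Lattice α] [BoundedOrder α] : Prop :=
  (∀ a b c : α, a ⊓ (b ⊔ c) = (a ⊓ b) ⊔ (a ⊓ c)) ∧ ∀ a : α, ∃ b, a ⊓ b = ⊥ ∧ a ⊔ b = ⊤

section Transfer

variable {α β : Type*} [Lattice α] [BoundedOrder α] [Lattice β] [BoundedOrder β]

theorem isBooleanLattice_of_orderIso (e : α ≃o β) (h : IsBooleanLattice α) :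
    IsBooleanLattice β := by
  obtain ⟨hd, hc⟩ := h
  constructor
  · intro a b c
    have h1 := congrArg e (hd (e.symm a) (e.symm b) (e.symm c))
    simpa only [OrderIso.map_inf, OrderIso.map_sup, OrderIso.apply_symm_apply] using h1
  · intro a
    obtain ⟨b, hb1, hb2⟩ := hc (e.symm a)
    refine ⟨e b, ?_, ?_⟩
    · have := congrArg e hb1
      simpa only [OrderIso.map_inf, OrderIso.apply_symm_apply, OrderIso.map_bot] using this
    · have := congrArg e hb2
      simpa only [OrderIso.map_sup, OrderIso.apply_symm_apply, OrderIso.map_top] using this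

theorem sup_inf_of_inf_sup (hd : ∀ a b c : α, a ⊓ (b ⊔ c) = (a ⊓ b) ⊔ (a ⊓ c)) (a b c : α) :
    a ⊔ (b ⊓ c) = (a ⊔ b) ⊓ (a ⊔ c) := by
  refine le_antisymm (le_inf (sup_le_sup_left inf_le_left a) (sup_le_sup_left inf_le_right a)) ?_
  calc (a ⊔ b) ⊓ (a ⊔ c) = ((a ⊔ b) ⊓ a) ⊔ ((a ⊔ b) ⊓ c) := hd _ _ _
    _ ≤ a ⊔ ((c ⊓ a) ⊔ (c ⊓ b)) := by
        refine sup_le_sup inf_le_right (le_of_eq ?_)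
        rw [inf_comm]
        exact hd c a b
    _ ≤ a ⊔ (b ⊓ c) := by
        refine sup_le le_sup_left (sup_le (inf_le_right.trans le_sup_left) ?_)
        rw [inf_comm]
        exact le_sup_right

theorem IsBooleanLattice.dual (h : IsBooleanLattice α) : IsBooleanLattice αᵒᵈ := by
  obtain ⟨hd, hc⟩ := h
  constructor
  · intro a b c
    exact sup_inf_of_inf_sup hd (OrderDual.ofDual a) (OrderDual.ofDual b) (OrderDual.ofDual c)
  · intro a
    obtain ⟨b, h1, h2⟩ := hc (OrderDual.ofDual a)
    exact ⟨OrderDual.toDual b, h2, h1⟩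

end Transfer

section SquarefreeAux

theorem squarefree_dvd_of_prime_dvd :
    ∀ m : ℕ, Squarefree m → ∀ k : ℕ, (∀ p : ℕ, p.Prime → p ∣ m → p ∣ k) → m ∣ k := by
  intro m
  induction m using Nat.strong_induction_on with
  | _ m ih =>
    intro hm k hk
    rcases eq_or_ne m 1 with rfl | hm1
    · exact one_dvd k
    have hm0 : m ≠ 0 := by rintro rfl; exact not_squarefree_zero hm
    set p := m.minFac with hp_def
    have hp : p.Prime := Nat.minFac_prime hm1
    have hpd : p ∣ m := Nat.minFac_dvd m
    set m' := m / p with hm'_def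
    have hmm : m = p * m' := (Nat.mul_div_cancel' hpd).symm
    have hm'd : m' ∣ m := Nat.div_dvd_of_dvd hpd
    have hm'sq : Squarefree m' := hm.squarefree_of_dvd hm'd
    have hpm' : ¬ p ∣ m' := by
      intro hpm'
      have hsq : p * p ∣ m := by
        rw [hmm]
        exact mul_dvd_mul dvd_rfl hpm'
      exact hp.ne_one (Nat.isUnit_iff.mp (hm p hsq))
    have hm'0 : m' ≠ 0 := by
      intro h
      rw [h, mul_zero] at hmm
      exact hm0 hmm
    have hm'lt : m' < m := by
      rw [hmm]
      exact lt_mul_of_one_lt_left (Nat.pos_of_ne_zero hm'0) hp.one_lt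
    have h1 : p ∣ k := hk p hp hpd
    have h2 : m' ∣ k := ih m' hm'lt hm'sq k (fun q hq hqm' => hk q hq (hqm'.trans hm'd))
    have hcop : Nat.Coprime p m' := (hp.coprime_iff_not_dvd).mpr hpm'
    rw [hmm]
    exact hcop.mul_dvd_of_dvd_of_dvd h1 h2

end SquarefreeAux

section GroupLemmas

open Subgroup
open scoped commutatorElement

variable {G : Type*} [Group G] [Finite G]

theorem prime_card_ne_bot {A : Subgroup G} (hA : (Nat.card A).Prime) : A ≠ ⊥ := by
  intro h
  rw [h, Subgroup.card_bot] at hA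
  exact Nat.not_prime_one hA

theorem inf_eq_bot_of_prime_card {A B : Subgroup G} (hA : (Nat.card A).Prime)
    (hB : (Nat.card B).Prime) (hne : A ≠ B) : A ⊓ B = ⊥ := by
  have h1 : Nat.card ↥(A ⊓ B) ∣ Nat.card A := Subgroup.card_dvd_of_le inf_le_left
  have h2 : Nat.card ↥(A ⊓ B) ∣ Nat.card B := Subgroup.card_dvd_of_le inf_le_right
  rcases hA.eq_one_or_self_of_dvd _ h1 with h | h
  · exact Subgroup.card_eq_one.mp h
  · exfalso
    have hAB : A ⊓ B = A := Subgroup.eq_of_le_of_card_ge inf_le_left h.ge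
    have hle : A ≤ B := hAB ▸ inf_le_right
    have hcd : Nat.card A ∣ Nat.card B := Subgroup.card_dvd_of_le hle
    have hcc : Nat.card A = Nat.card B := (Nat.prime_dvd_prime_iff_eq hA hB).mp hcd
    exact hne (Subgroup.eq_of_le_of_card_ge hle hcc.ge)

theorem prime_card_eq_of_le_sup
    (hd : ∀ a b c : Subgroup G, a ⊓ (b ⊔ c) = (a ⊓ b) ⊔ (a ⊓ c))
    {A B C : Subgroup G} (hA : (Nat.card A).Prime) (hB : (Nat.card B).Prime)
    (hC : (Nat.card C).Prime) (hle : C ≤ A ⊔ B) : C = A ∨ C = B := by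
  by_contra h
  push_neg at h
  obtain ⟨h1, h2⟩ := h
  have hbot : C = ⊥ := by
    have hdc := hd C A B
    rwa [inf_eq_left.mpr hle, inf_eq_bot_of_prime_card hC hA h1,
        inf_eq_bot_of_prime_card hC hB h2, bot_sup_eq] at hdc
  exact prime_card_ne_bot hC hbot

theorem exists_gen_of_prime_card {A : Subgroup G} (hA : (Nat.card A).Prime) :
    ∃ a : G, a ∈ A ∧ orderOf a = Nat.card A ∧ Subgroup.zpowers a = A := by
  haveI : Fact (Nat.card A).Prime := ⟨hA⟩
  haveI : IsCyclic A := isCyclic_of_prime_card (p := Nat.card A) rfl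
  obtain ⟨g, hg⟩ := IsCyclic.exists_ofOrder_eq_natCard (α := A)
  refine ⟨(g : G), g.2, ?_, ?_⟩
  · rw [Subgroup.orderOf_coe, hg]
  · apply Subgroup.eq_of_le_of_card_ge (Subgroup.zpowers_le.mpr g.2)
    rw [Nat.card_zpowers, Subgroup.orderOf_coe, hg]

theorem orderOf_pow_div_prime {x : G} {q : ℕ} (hq : q.Prime) (hdvd : q ∣ orderOf x) :
    orderOf (x ^ (orderOf x / q)) = q := by
  have hx : orderOf x ≠ 0 := (orderOf_pos x).ne'
  rw [orderOf_pow, Nat.gcd_eq_right (Nat.div_dvd_of_dvd hdvd), Nat.div_div_self hdvd hx]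

theorem subgroup_eq_of_card_eq {H : Type*} [Group H] [Finite H] [IsCyclic H]
    {A B : Subgroup H} (h : Nat.card A = Nat.card B) : A = B := by
  classical
  cases nonempty_fintype H
  have key : ∀ C : Subgroup H, Finset.univ.filter (fun x => x ∈ C) =
      Finset.univ.filter (fun x => x ^ (Nat.card C) = 1) := by
    intro C
    have hpos : 0 < Nat.card C := Nat.card_pos
    apply Finset.eq_of_subset_of_card_le
    · intro x hx
      rw [Finset.mem_filter] at hx
      rw [Finset.mem_filter]
      refine ⟨Finset.mem_univ x, ?_⟩
      have hpow : (⟨x, hx.2⟩ : C) ^ (Nat.card C) = 1 := pow_card_eq_one'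
      have := congrArg (Subtype.val) hpow
      simpa only [SubmonoidClass.coe_pow, OneMemClass.coe_one] using this
    · calc (Finset.univ.filter fun x => x ^ (Nat.card C) = 1).card ≤ Nat.card C :=
            IsCyclic.card_pow_eq_one_le hpos
        _ = (Finset.univ.filter fun x => x ∈ C).card := by
            rw [Nat.card_eq_fintype_card, Fintype.card_subtype]
  have hAB := key A
  rw [h, ← key B] at hAB
  ext x
  have := Finset.ext_iff.mp hAB x
  simpa using this

theorem isCyclic_zpowers (z : G) : IsCyclic (Subgroup.zpowers z) := by
  refine ⟨⟨z, Subgroup.mem_zpowers z⟩, fun x => ?_⟩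
  obtain ⟨k, hk⟩ := Subgroup.mem_zpowers_iff.mp x.2
  exact Subgroup.mem_zpowers_iff.mpr ⟨k, by ext; simpa using hk⟩

theorem eq_of_card_eq_of_le_zpowers {z : G} {A B : Subgroup G}
    (hA : A ≤ Subgroup.zpowers z) (hB : B ≤ Subgroup.zpowers z)
    (h : Nat.card A = Nat.card B) : A = B := by
  haveI := _root_.isCyclic_zpowers z
  have hA' : Nat.card (A.subgroupOf (Subgroup.zpowers z)) = Nat.card A :=
    Nat.card_congr (Subgroup.subgroupOfEquivOfLe hA).toEquiv
  have hB' : Nat.card (B.subgroupOf (Subgroup.zpowers z)) = Nat.card B :=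
    Nat.card_congr (Subgroup.subgroupOfEquivOfLe hB).toEquiv
  have heq : A.subgroupOf (Subgroup.zpowers z) = B.subgroupOf (Subgroup.zpowers z) :=
    subgroup_eq_of_card_eq (by rw [hA', hB', h])
  have hinf := Subgroup.subgroupOf_inj.mp heq
  rwa [inf_eq_left.mpr hA, inf_eq_left.mpr hB] at hinf

theorem eq_of_prime_card_eq
    (hd : ∀ a b c : Subgroup G, a ⊓ (b ⊔ c) = (a ⊓ b) ⊔ (a ⊓ c))
    {A B : Subgroup G} (hA : (Nat.card A).Prime) (hcard : Nat.card B = Nat.card A) :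
    A = B := by
  by_contra hne
  have hB : (Nat.card B).Prime := hcard ▸ hA
  obtain ⟨a, haA, haord, hazp⟩ := exists_gen_of_prime_card hA
  obtain ⟨b, hbB, hbord, hbzp⟩ := exists_gen_of_prime_card hB
  have haM : a ∈ A ⊔ B := (le_sup_left : A ≤ A ⊔ B) haA
  have hbM : b ∈ A ⊔ B := (le_sup_right : B ≤ A ⊔ B) hbB
  have hb1 : b ≠ 1 := by
    intro h
    rw [h, orderOf_one] at hbord
    exact hB.ne_one hbord.symm
  have hbot : A ⊓ B = ⊥ := inf_eq_bot_of_prime_card hA hB hne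
  set z := a * b with hz
  have hzM : z ∈ A ⊔ B := mul_mem haM hbM
  have hz1 : z ≠ 1 := by
    intro h
    have hb : b = a⁻¹ := by
      have hab : a * b = 1 := h
      rw [eq_comm, inv_eq_iff_mul_eq_one]
      exact hab
    have hmem : b ∈ A ⊓ B := by
      rw [Subgroup.mem_inf]
      refine ⟨?_, hbB⟩
      rw [hb]
      exact inv_mem haA
    rw [hbot, Subgroup.mem_bot] at hmem
    exact hb1 hmem
  have hm1 : orderOf z ≠ 1 := by simpa [orderOf_eq_one_iff] using hz1
  set q := (orderOf z).minFac with hqdef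
  have hq : q.Prime := Nat.minFac_prime hm1
  have hqd : q ∣ orderOf z := Nat.minFac_dvd _
  set c := z ^ (orderOf z / q) with hc
  have hcord : orderOf c = q := orderOf_pow_div_prime hq hqd
  have hczp : Subgroup.zpowers c ≤ Subgroup.zpowers z :=
    Subgroup.zpowers_le.mpr (pow_mem (Subgroup.mem_zpowers z) _)
  have hcM : Subgroup.zpowers c ≤ A ⊔ B := Subgroup.zpowers_le.mpr (pow_mem hzM _)
  have hccard : (Nat.card (Subgroup.zpowers c)).Prime := by
    rw [Nat.card_zpowers, hcord]; exact hq
  have habz : a ∈ Subgroup.zpowers z ∧ b ∈ Subgroup.zpowers z := by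
    rcases prime_card_eq_of_le_sup hd hA hB hccard hcM with h | h
    · have hAz : A ≤ Subgroup.zpowers z := h ▸ hczp
      have haz := hAz haA
      refine ⟨haz, ?_⟩
      have hbz : b = a⁻¹ * z := by rw [hz, inv_mul_cancel_left]
      rw [hbz]
      exact mul_mem (inv_mem haz) (Subgroup.mem_zpowers z)
    · have hBz : B ≤ Subgroup.zpowers z := h ▸ hczp
      have hbz := hBz hbB
      refine ⟨?_, hbz⟩
      have haz : a = z * b⁻¹ := by rw [hz, mul_inv_cancel_right]
      rw [haz]
      exact mul_mem (Subgroup.mem_zpowers z) (inv_mem hbz)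
  have hAz : A ≤ Subgroup.zpowers z := by
    rw [← hazp]; exact Subgroup.zpowers_le.mpr habz.1
  have hBz : B ≤ Subgroup.zpowers z := by
    rw [← hbzp]; exact Subgroup.zpowers_le.mpr habz.2
  exact hne (eq_of_card_eq_of_le_zpowers hAz hBz hcard.symm)

theorem normal_of_prime_card
    (hd : ∀ a b c : Subgroup G, a ⊓ (b ⊔ c) = (a ⊓ b) ⊔ (a ⊓ c))
    {A : Subgroup G} (hA : (Nat.card A).Prime) : A.Normal := by
  constructor
  intro x hx g
  have hcard : Nat.card ↥(Subgroup.map (MulAut.conj g).toMonoidHom A) = Nat.card A :=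
    (Nat.card_congr (Subgroup.equivMapOfInjective A _ (MulAut.conj g).injective).toEquiv).symm
  have hmap : A = Subgroup.map (MulAut.conj g).toMonoidHom A :=
    eq_of_prime_card_eq hd hA hcard
  have hmem : (MulAut.conj g).toMonoidHom x ∈ Subgroup.map (MulAut.conj g).toMonoidHom A :=
    Subgroup.mem_map_of_mem _ hx
  rw [← hmap] at hmem
  simpa [MulAut.conj_apply] using hmem

theorem boolean_subgroup_forward (h : IsBooleanLattice (Subgroup G)) :
    IsCyclic G ∧ Squarefree (Nat.card G) := by
  classical
  obtain ⟨hd, hc⟩ := h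
  set Sset : Set (Subgroup G) := {A : Subgroup G | (Nat.card A).Prime} with hSset
  set S : Finset (Subgroup G) := (Set.toFinite Sset).toFinset with hSdef
  have hSmem : ∀ {A : Subgroup G}, A ∈ S ↔ (Nat.card A).Prime := by
    intro A
    rw [hSdef, Set.Finite.mem_toFinset]
    rfl
  -- the join of all prime-order subgroups is everything
  have Jtop : S.sup id = ⊤ := by
    obtain ⟨K, hK1, hK2⟩ := hc (S.sup id)
    have hKbot : K = ⊥ := by
      rw [Subgroup.eq_bot_iff_forall]
      by_contra hKb
      push_neg at hKb
      obtain ⟨x, hxK, hx1⟩ := hKb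
      have hord : orderOf x ≠ 1 := by simpa [orderOf_eq_one_iff] using hx1
      set q := (orderOf x).minFac with hq_def
      have hq : q.Prime := Nat.minFac_prime hord
      set y := x ^ (orderOf x / q) with hy_def
      have hy : orderOf y = q := orderOf_pow_div_prime hq (Nat.minFac_dvd _)
      have hyS : Subgroup.zpowers y ∈ S := hSmem.mpr (by rw [Nat.card_zpowers, hy]; exact hq)
      have h1 : Subgroup.zpowers y ≤ S.sup id := Finset.le_sup (f := id) hyS
      have h2 : Subgroup.zpowers y ≤ K := Subgroup.zpowers_le.mpr (pow_mem hxK _)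
      have h3 : Subgroup.zpowers y ≤ ⊥ := hK1 ▸ le_inf h1 h2
      have h4 := h3 (Subgroup.mem_zpowers y)
      rw [Subgroup.mem_bot] at h4
      rw [h4, orderOf_one] at hy
      exact hq.ne_one hy.symm
    rw [hKbot, sup_bot_eq] at hK2
    exact hK2
  have hinj : ∀ A ∈ S, ∀ B ∈ S, Nat.card A = Nat.card B → A = B :=
    fun A hA B hB hcd => eq_of_prime_card_eq hd (hSmem.mp hA) hcd.symm
  -- elements of distinct prime-order subgroups commute
  have hcomm : ∀ A ∈ S, ∀ B ∈ S, A ≠ B → ∀ a ∈ A, ∀ b ∈ B, Commute a b := by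
    intro A hA B hB hne a ha b hb
    have hAn : A.Normal := normal_of_prime_card hd (hSmem.mp hA)
    have hBn : B.Normal := normal_of_prime_card hd (hSmem.mp hB)
    rw [← commutatorElement_eq_one_iff_commute]
    have h1 : ⁅a, b⁆ ∈ A := by
      have hmem : b * a⁻¹ * b⁻¹ ∈ A := hAn.conj_mem _ (inv_mem ha) b
      have := mul_mem ha hmem
      simpa [commutatorElement_def, mul_assoc] using this
    have h2 : ⁅a, b⁆ ∈ B := by
      have hmem : a * b * a⁻¹ ∈ B := hBn.conj_mem _ hb a
      have := mul_mem hmem (inv_mem hb)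
      simpa [commutatorElement_def, mul_assoc] using this
    have h3 : ⁅a, b⁆ ∈ A ⊓ B := ⟨h1, h2⟩
    rwa [inf_eq_bot_of_prime_card (hSmem.mp hA) (hSmem.mp hB) hne, Subgroup.mem_bot] at h3
  -- coprimality
  have hcop : ∀ A ∈ S, ∀ T : Finset (Subgroup G), T ⊆ S → A ∉ T →
      (Nat.card A).Coprime (∏ B ∈ T, Nat.card B) := by
    intro A hA T hTS hAT
    have hp := hSmem.mp hA
    rw [hp.coprime_iff_not_dvd]
    intro hdvd
    obtain ⟨B, hBT, hBd⟩ := (Prime.dvd_finset_prod_iff hp.prime _).mp hdvd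
    have hBp := hSmem.mp (hTS hBT)
    have hce : Nat.card A = Nat.card B := (Nat.prime_dvd_prime_iff_eq hp hBp).mp hBd
    exact hAT ((hinj A hA B (hTS hBT) hce) ▸ hBT)
  -- main induction
  have hgen : ∀ T : Finset (Subgroup G), T ⊆ S →
      ∃ g : G, g ∈ T.sup id ∧ orderOf g = ∏ B ∈ T, Nat.card B ∧
        Squarefree (∏ B ∈ T, Nat.card B) := by
    intro T
    induction T using Finset.induction_on with
    | empty =>
      intro _
      exact ⟨1, one_mem _, by simp, by simpa using squarefree_one⟩
    | @insert A T' hAT' ih =>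
      intro hsub
      have hAS : A ∈ S := hsub (Finset.mem_insert_self A T')
      have hT'S : T' ⊆ S := (Finset.subset_insert A T').trans hsub
      obtain ⟨g, hg, hgord, hgsq⟩ := ih hT'S
      obtain ⟨a, haA, haord, -⟩ := exists_gen_of_prime_card (hSmem.mp hAS)
      have hcop' := hcop A hAS T' hT'S hAT'
      have hcomm' : Commute a g := by
        have hle : T'.sup id ≤ Subgroup.centralizer {a} := by
          apply Finset.sup_le
          intro B hB
          intro b hb
          rw [Subgroup.mem_centralizer_iff]
          intro y hy
          rw [Set.mem_singleton_iff] at hy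
          rw [hy]
          exact (hcomm A hAS B (hT'S hB) (fun hEq => hAT' (hEq ▸ hB)) a haA b hb).eq
        have := hle hg
        rw [Subgroup.mem_centralizer_iff] at this
        exact this a rfl
      refine ⟨a * g, ?_, ?_, ?_⟩
      · have h1 : a ∈ (insert A T').sup id :=
          Finset.le_sup (f := id) (Finset.mem_insert_self A T') haA
        have h2 : g ∈ (insert A T').sup id :=
          (Finset.sup_mono (f := id) (Finset.subset_insert A T')) hg
        exact mul_mem h1 h2
      · rw [Finset.prod_insert hAT',
          hcomm'.orderOf_mul_eq_mul_orderOf_of_coprime (by rw [haord, hgord]; exact hcop'),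
          haord, hgord]
      · rw [Finset.prod_insert hAT']
        exact (Nat.squarefree_mul hcop').mpr ⟨(hSmem.mp hAS).prime.squarefree, hgsq⟩
  obtain ⟨g, hg, hgord, hgsq⟩ := hgen S subset_rfl
  -- every prime-order subgroup lies in zpowers g
  have hAle : ∀ A ∈ S, A ≤ Subgroup.zpowers g := by
    intro A hA
    have hp := hSmem.mp hA
    have hdvd : Nat.card A ∣ orderOf g := hgord ▸ Finset.dvd_prod_of_mem _ hA
    set y := g ^ (orderOf g / Nat.card A) with hy_def
    have hy : orderOf y = Nat.card A := orderOf_pow_div_prime hp hdvd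
    have hAy : A = Subgroup.zpowers y :=
      eq_of_prime_card_eq hd hp (by rw [Nat.card_zpowers, hy])
    rw [hAy]
    exact Subgroup.zpowers_le.mpr (pow_mem (Subgroup.mem_zpowers g) _)
  have htople : (⊤ : Subgroup G) ≤ Subgroup.zpowers g := by
    rw [← Jtop]
    exact Finset.sup_le hAle
  have htop : Subgroup.zpowers g = ⊤ := le_antisymm le_top htople
  have hcard : orderOf g = Nat.card G := by
    rw [← Nat.card_zpowers g, htop, Subgroup.card_top]
  refine ⟨isCyclic_of_orderOf_eq_card g hcard, ?_⟩
  rw [← hcard, hgord]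
  exact hgsq

theorem boolean_subgroup_reverse [IsCyclic G] (hsq : Squarefree (Nat.card G)) :
    IsBooleanLattice (Subgroup G) := by
  obtain ⟨g, hg⟩ := IsCyclic.exists_ofOrder_eq_natCard (α := G)
  set n := Nat.card G with hn_def
  have hn0 : n ≠ 0 := Nat.card_pos.ne'
  have hHd : ∀ d, d ∣ n → Nat.card (Subgroup.zpowers (g ^ (n / d))) = d := by
    intro d hdn
    rw [Nat.card_zpowers, orderOf_pow, hg, Nat.gcd_eq_right (Nat.div_dvd_of_dvd hdn),
      Nat.div_div_self hdn hn0]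
  have huniq : ∀ H : Subgroup G, H = Subgroup.zpowers (g ^ (n / Nat.card H)) := by
    intro H
    have hdvd : Nat.card H ∣ n := Subgroup.card_subgroup_dvd_card H
    exact subgroup_eq_of_card_eq (by rw [hHd _ hdvd])
  have hle : ∀ H K : Subgroup G, Nat.card H ∣ Nat.card K → H ≤ K := by
    intro H K hdvd
    have hH : Nat.card H ∣ n := Subgroup.card_subgroup_dvd_card H
    have hK : Nat.card K ∣ n := Subgroup.card_subgroup_dvd_card K
    have hKpos : 0 < Nat.card K := Nat.card_pos
    rw [huniq H, huniq K]
    apply Subgroup.zpowers_le.mpr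
    have harith : n / Nat.card H = (n / Nat.card K) * (Nat.card K / Nat.card H) := by
      rw [Nat.div_mul_div_comm hK hdvd, mul_comm n (Nat.card K),
        Nat.mul_div_mul_left _ _ hKpos]
    rw [harith, pow_mul]
    exact pow_mem (Subgroup.mem_zpowers _) _
  constructor
  · -- distributivity
    intro a b c
    refine le_antisymm ?_ (sup_le (le_inf inf_le_left (inf_le_right.trans le_sup_left))
      (le_inf inf_le_left (inf_le_right.trans le_sup_right)))
    apply hle
    apply squarefree_dvd_of_prime_dvd _
      (hsq.squarefree_of_dvd (Subgroup.card_subgroup_dvd_card _))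
    intro p hp hpd
    have hpa : p ∣ Nat.card a := hpd.trans (Subgroup.card_dvd_of_le inf_le_left)
    have hpbc : p ∣ Nat.card ↥(b ⊔ c) := hpd.trans (Subgroup.card_dvd_of_le inf_le_right)
    have hbc : Nat.card ↥(b ⊔ c) ∣ Nat.lcm (Nat.card b) (Nat.card c) := by
      have hL : Nat.lcm (Nat.card b) (Nat.card c) ∣ n :=
        Nat.lcm_dvd (Subgroup.card_subgroup_dvd_card b) (Subgroup.card_subgroup_dvd_card c)
      set L := Subgroup.zpowers (g ^ (n / Nat.lcm (Nat.card b) (Nat.card c))) with hL_def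
      have hcardL : Nat.card L = Nat.lcm (Nat.card b) (Nat.card c) := hHd _ hL
      have hbcL : b ⊔ c ≤ L :=
        sup_le (hle b L (by rw [hcardL]; exact Nat.dvd_lcm_left _ _))
          (hle c L (by rw [hcardL]; exact Nat.dvd_lcm_right _ _))
      exact hcardL ▸ Subgroup.card_dvd_of_le hbcL
    have hpbc2 : p ∣ Nat.card b * Nat.card c :=
      (hpbc.trans hbc).trans (Nat.lcm_dvd_mul _ _)
    have hpn : p ∣ n := hpa.trans (Subgroup.card_subgroup_dvd_card a)
    set P := Subgroup.zpowers (g ^ (n / p)) with hP_def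
    have hcardP : Nat.card P = p := hHd p hpn
    rcases hp.dvd_mul.mp hpbc2 with h | h
    · have hPab : P ≤ a ⊓ b :=
        le_inf (hle P a (hcardP ▸ hpa)) (hle P b (hcardP ▸ h))
      exact hcardP ▸ Subgroup.card_dvd_of_le (hPab.trans le_sup_left)
    · have hPac : P ≤ a ⊓ c :=
        le_inf (hle P a (hcardP ▸ hpa)) (hle P c (hcardP ▸ h))
      exact hcardP ▸ Subgroup.card_dvd_of_le (hPac.trans le_sup_right)
  · -- complements
    intro H
    have hdn : Nat.card H ∣ n := Subgroup.card_subgroup_dvd_card H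
    set d := Nat.card H with hd_def
    have hnd : n / d ∣ n := Nat.div_dvd_of_dvd hdn
    set K := Subgroup.zpowers (g ^ (n / (n / d))) with hK_def
    have hcardK : Nat.card K = n / d := hHd _ hnd
    have hcop : Nat.Coprime d (n / d) := by
      have hg2 : Nat.gcd d (n / d) * Nat.gcd d (n / d) ∣ n := by
        have h1 := Nat.gcd_dvd_left d (n / d)
        have h2 := Nat.gcd_dvd_right d (n / d)
        have := mul_dvd_mul h1 h2
        rwa [Nat.mul_div_cancel' hdn] at this
      exact Nat.isUnit_iff.mp (hsq _ hg2)
    refine ⟨K, ?_, ?_⟩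
    · rw [← Subgroup.card_eq_one]
      have h1 : Nat.card ↥(H ⊓ K) ∣ d := Subgroup.card_dvd_of_le inf_le_left
      have h2 : Nat.card ↥(H ⊓ K) ∣ n / d := hcardK ▸ Subgroup.card_dvd_of_le inf_le_right
      exact Nat.eq_one_of_dvd_one (hcop ▸ Nat.dvd_gcd h1 h2)
    · apply Subgroup.eq_top_of_card_eq
      have h1 : d ∣ Nat.card ↥(H ⊔ K) := Subgroup.card_dvd_of_le le_sup_left
      have h2 : (n / d) ∣ Nat.card ↥(H ⊔ K) := hcardK ▸ Subgroup.card_dvd_of_le le_sup_right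
      have hn : n ∣ Nat.card ↥(H ⊔ K) := by
        have := hcop.mul_dvd_of_dvd_of_dvd h1 h2
        rwa [Nat.mul_div_cancel' hdn] at this
      exact Nat.dvd_antisymm (Subgroup.card_subgroup_dvd_card _) hn

theorem subgroup_boolean_iff_cyclic_squarefree (G : Type*) [Group G] [Finite G] :
    IsBooleanLattice (Subgroup G) ↔ IsCyclic G ∧ Squarefree (Nat.card G) :=
  ⟨boolean_subgroup_forward, fun ⟨h1, h2⟩ => @boolean_subgroup_reverse G _ _ h1 h2⟩

end GroupLemmas

/-- A finite Galois extension has Boolean lattice of intermediate fields iff its Galois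
group is cyclic of squarefree order. -/
theorem galois_boolean_iff_cyclic_squarefree {k L : Type*} [Field k] [Field L]
    [Algebra k L] [FiniteDimensional k L] [IsGalois k L] :
    IsBooleanLattice (IntermediateField k L) ↔
      IsCyclic (L ≃ₐ[k] L) ∧ Squarefree (Nat.card (L ≃ₐ[k] L)) := by
  have e := IsGalois.intermediateFieldEquivSubgroup (F := k) (E := L)
  rw [← subgroup_boolean_iff_cyclic_squarefree (L ≃ₐ[k] L)]
  constructor
  · intro h
    exact isBooleanLattice_of_orderIso (OrderIso.dualDual (Subgroup (L ≃ₐ[k] L))).symm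
      (IsBooleanLattice.dual (isBooleanLattice_of_orderIso e h))
  · intro h
    exact isBooleanLattice_of_orderIso e.symm (IsBooleanLattice.dual h)
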